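/- Every key polynomial Q ∈ K[x] for ν is irreducible. -/

import Mathlib

open Polynomial
open scoped Classical
noncomputable section

/-- `ν` is (the restriction to nonzero polynomials of) a valuation on `K[x]`,
nontrivial on `K`, with `ν(x) ≥ 0`.  Values are taken in a linearly ordered
field `Γ` (playing the role of the divisible hull of the value group). -/
structure IsVal {K : Type*} [Field K] {Γ : Type*} [Field Γ] [LinearOrder Γ] [IsStrictOrderedRing Γ]
    (ν : Polynomial K → Γ) : Prop where
  map_mul : ∀ f g : Polynomial K, f ≠ 0 → g ≠ 0 → ν (f * g) = ν f + ν g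
  map_add : ∀ f g : Polynomial K, f ≠ 0 → g ≠ 0 → f + g ≠ 0 →
    min (ν f) (ν g) ≤ ν (f + g)
  nontrivial : ∃ a : K, a ≠ 0 ∧ ν (C a) ≠ 0
  nonneg_x : 0 ≤ ν X

/-- `ε(f) = max_{b ≥ 1, ∂_b f ≠ 0} (ν(f) - ν(∂_b f))/b`, where `∂_b` is the
`b`-th formal (Hasse) derivative.  (Terms with `∂_b f = 0` correspond to the
value `-∞` and are omitted from the maximum.) -/
noncomputable def eps {K : Type*} [Field K] {Γ : Type*} [Field Γ] [LinearOrder Γ] [IsStrictOrderedRing Γ]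
    (ν : Polynomial K → Γ) (f : Polynomial K) : Γ :=
  if h : ((Finset.Icc 1 f.natDegree).filter
      fun b => Polynomial.hasseDeriv b f ≠ 0).Nonempty then
    ((Finset.Icc 1 f.natDegree).filter
      fun b => Polynomial.hasseDeriv b f ≠ 0).sup' h
      fun b => (ν f - ν (Polynomial.hasseDeriv b f)) / (b : Γ)
  else 0

/-- A monic (nonconstant) polynomial `Q` is a key polynomial for `ν` if every
`f ∈ K[x]` with `ε(f) ≥ ε(Q)` satisfies `deg f ≥ deg Q`. -/
def IsKeyPol {K : Type*} [Field K] {Γ : Type*} [Field Γ] [LinearOrder Γ] [IsStrictOrderedRing Γ]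
    (ν : Polynomial K → Γ) (Q : Polynomial K) : Prop :=
  Q.Monic ∧ 1 ≤ Q.natDegree ∧
    ∀ f : Polynomial K, 1 ≤ f.natDegree → eps ν Q ≤ eps ν f →
      Q.natDegree ≤ f.natDegree

/-- The `i`-th coefficient `f_i` of the `q`-standard expansion
`f = Σ f_i q^i` (each `f_i = 0` or `deg f_i < deg q`), for `q` monic. -/
noncomputable def qCoeff {K : Type*} [Field K] (q f : Polynomial K) (i : ℕ) :
    Polynomial K :=
  (f /ₘ q ^ i) %ₘ q

/-- The `q`-truncation `ν_q(f) = min_i ν(f_i q^i)` of `ν`, the minimum taken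
over the nonzero coefficients of the `q`-standard expansion of `f`. -/
noncomputable def truncVal {K : Type*} [Field K] {Γ : Type*}
    [Field Γ] [LinearOrder Γ] [IsStrictOrderedRing Γ] (ν : Polynomial K → Γ) (q f : Polynomial K) : Γ :=
  if h : ((Finset.range (f.natDegree + 1)).filter
      fun i => qCoeff q f i ≠ 0).Nonempty then
    ((Finset.range (f.natDegree + 1)).filter
      fun i => qCoeff q f i ≠ 0).inf' h
      fun i => ν (qCoeff q f i * q ^ i)
  else 0

/-- `I(Q) = {b : (ν(Q) - ν(∂_b Q))/b = ε(Q)}`. -/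
def Iset {K : Type*} [Field K] {Γ : Type*} [Field Γ] [LinearOrder Γ] [IsStrictOrderedRing Γ]
    (ν : Polynomial K → Γ) (Q : Polynomial K) : Set ℕ :=
  {b | 1 ≤ b ∧ Polynomial.hasseDeriv b Q ≠ 0 ∧
    (ν Q - ν (Polynomial.hasseDeriv b Q)) / (b : Γ) = eps ν Q}

/-- `S_Q(f) = {i : ν(f_i Q^i) = ν_Q(f)}` (over nonzero coefficients). -/
def Sset {K : Type*} [Field K] {Γ : Type*} [Field Γ] [LinearOrder Γ] [IsStrictOrderedRing Γ]
    (ν : Polynomial K → Γ) (q f : Polynomial K) : Set ℕ :=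
  {i | qCoeff q f i ≠ 0 ∧ ν (qCoeff q f i * q ^ i) = truncVal ν q f}


variable {K : Type*} [Field K] {Γ : Type*} [Field Γ] [LinearOrder Γ] [IsStrictOrderedRing Γ]

theorem val_sum_ge (ν : Polynomial K → Γ) (hν : IsVal ν) {ι : Type*}
    (s : Finset ι) (F : ι → Polynomial K) (c : Γ)
    (h : ∀ i ∈ s, F i ≠ 0 → c ≤ ν (F i)) (hs : (∑ i ∈ s, F i) ≠ 0) :
    c ≤ ν (∑ i ∈ s, F i) := by
  induction s using Finset.induction_on with
  | empty => simp at hs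
  | insert a s ha ih =>
    rw [Finset.sum_insert ha] at hs ⊢
    by_cases h1 : F a = 0
    · rw [h1, zero_add] at hs ⊢
      exact ih (fun i hi => h i (Finset.mem_insert_of_mem hi)) hs
    by_cases h2 : (∑ i ∈ s, F i) = 0
    · rw [h2, add_zero]
      exact h a (Finset.mem_insert_self a s) h1
    · refine le_trans ?_ (hν.map_add _ _ h1 h2 hs)
      exact le_min (h a (Finset.mem_insert_self a s) h1)
        (ih (fun i hi => h i (Finset.mem_insert_of_mem hi)) h2)

-- key estimate: ν(∂_i f) ≥ ν f - i * eps f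

theorem hasse_ge (ν : Polynomial K → Γ) (f : Polynomial K) (i : ℕ)
    (hf : Polynomial.hasseDeriv i f ≠ 0) :
    ν f - (i : Γ) * eps ν f ≤ ν (Polynomial.hasseDeriv i f) := by
  rcases Nat.eq_zero_or_pos i with hi | hi
  · subst hi; simp [Polynomial.hasseDeriv_zero]
  have hile : i ≤ f.natDegree := by
    by_contra hlt
    exact hf (Polynomial.hasseDeriv_eq_zero_of_lt_natDegree f i (not_le.mp hlt))
  have hmem : i ∈ (Finset.Icc 1 f.natDegree).filter
      fun b => Polynomial.hasseDeriv b f ≠ 0 := by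
    simp only [Finset.mem_filter, Finset.mem_Icc]; exact ⟨⟨hi, hile⟩, hf⟩
  have hne : ((Finset.Icc 1 f.natDegree).filter
      fun b => Polynomial.hasseDeriv b f ≠ 0).Nonempty := ⟨i, hmem⟩
  have : (ν f - ν (Polynomial.hasseDeriv i f)) / (i : Γ) ≤ eps ν f := by
    rw [eps, dif_pos hne]
    exact Finset.le_sup' (fun b => (ν f - ν (Polynomial.hasseDeriv b f)) / (b : Γ)) hmem
  have hipos : (0:Γ) < i := by exact_mod_cast hi
  rw [div_le_iff₀ hipos] at this
  linarith [this]

theorem hasse_natDegree_ne (p : Polynomial K) (hp : p ≠ 0) :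
    Polynomial.hasseDeriv p.natDegree p ≠ 0 := by
  intro h
  have h0 : (Polynomial.hasseDeriv p.natDegree p).coeff 0 = p.coeff p.natDegree := by
    rw [Polynomial.hasseDeriv_coeff]; simp
  rw [h, Polynomial.coeff_zero] at h0
  exact hp (Polynomial.leadingCoeff_eq_zero.mp h0.symm)

theorem eps_mul_le (ν : Polynomial K → Γ) (hν : IsVal ν) (f g : Polynomial K)
    (hf : f ≠ 0) (hg : g ≠ 0) (hdeg : 1 ≤ (f * g).natDegree) :
    eps ν (f * g) ≤ max (eps ν f) (eps ν g) := by
  set M := max (eps ν f) (eps ν g) with hM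
  have hfg : f * g ≠ 0 := mul_ne_zero hf hg
  have hne : ((Finset.Icc 1 (f*g).natDegree).filter
      fun b => Polynomial.hasseDeriv b (f*g) ≠ 0).Nonempty :=
    ⟨(f*g).natDegree, by
      simp only [Finset.mem_filter, Finset.mem_Icc]
      exact ⟨⟨hdeg, le_refl _⟩, hasse_natDegree_ne _ hfg⟩⟩
  rw [eps, dif_pos hne]
  apply Finset.sup'_le
  intro b hb
  simp only [Finset.mem_filter, Finset.mem_Icc] at hb
  obtain ⟨⟨hb1, _⟩, hbne⟩ := hb
  have hbpos : (0:Γ) < b := by exact_mod_cast hb1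
  rw [div_le_iff₀ hbpos]
  have key : ν (f * g) - (b:Γ) * M ≤ ν (Polynomial.hasseDeriv b (f * g)) := by
    rw [Polynomial.hasseDeriv_mul]
    apply val_sum_ge ν hν
    · intro ij hij hterm
      rw [Finset.HasAntidiagonal.mem_antidiagonal] at hij
      have h1 : Polynomial.hasseDeriv ij.1 f ≠ 0 := fun h => hterm (by rw [h, zero_mul])
      have h2 : Polynomial.hasseDeriv ij.2 g ≠ 0 := fun h => hterm (by rw [h, mul_zero])
      rw [hν.map_mul _ _ h1 h2, hν.map_mul f g hf hg]
      have e1 := hasse_ge ν f ij.1 h1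
      have e2 := hasse_ge ν g ij.2 h2
      have m1 : (ij.1:Γ) * eps ν f ≤ (ij.1:Γ) * M :=
        mul_le_mul_of_nonneg_left (le_max_left _ _) (by positivity)
      have m2 : (ij.2:Γ) * eps ν g ≤ (ij.2:Γ) * M :=
        mul_le_mul_of_nonneg_left (le_max_right _ _) (by positivity)
      have hsum : (ij.1:Γ) + (ij.2:Γ) = (b:Γ) := by exact_mod_cast congrArg (Nat.cast (R:=Γ)) hij
      have hbm : (b:Γ) * M = (ij.1:Γ) * M + (ij.2:Γ) * M := by rw [← hsum]; ring
      linarith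
    · rw [← Polynomial.hasseDeriv_mul]; exact hbne
  linarith

/-- Every key polynomial is irreducible. -/
theorem keyPol_irreducible (ν : Polynomial K → Γ) (hν : IsVal ν)
    (Q : Polynomial K) (hQ : IsKeyPol ν Q) : Irreducible Q := by
  obtain ⟨hmonic, hdeg, hkey⟩ := hQ
  have hQ0 : Q ≠ 0 := hmonic.ne_zero
  constructor
  · exact Polynomial.not_isUnit_of_natDegree_pos Q hdeg
  · intro a b hab
    have ha0 : a ≠ 0 := fun h => hQ0 (by rw [hab, h, zero_mul])
    have hb0 : b ≠ 0 := fun h => hQ0 (by rw [hab, h, mul_zero])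
    by_contra hcon
    push_neg at hcon
    obtain ⟨hua, hub⟩ := hcon
    have hda : 1 ≤ a.natDegree := by
      rcases Nat.eq_zero_or_pos a.natDegree with h | h
      · have hC := Polynomial.eq_C_of_natDegree_eq_zero h
        exact absurd (hC ▸ Polynomial.isUnit_C.mpr (isUnit_iff_ne_zero.mpr
          (fun hc => ha0 (by rw [hC, hc, map_zero])))) hua
      · exact h
    have hdb : 1 ≤ b.natDegree := by
      rcases Nat.eq_zero_or_pos b.natDegree with h | h
      · have hC := Polynomial.eq_C_of_natDegree_eq_zero h
        exact absurd (hC ▸ Polynomial.isUnit_C.mpr (isUnit_iff_ne_zero.mpr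
          (fun hc => hb0 (by rw [hC, hc, map_zero])))) hub
      · exact h
    have hQd : Q.natDegree = a.natDegree + b.natDegree := by
      rw [hab, Polynomial.natDegree_mul ha0 hb0]
    have heps : eps ν Q ≤ max (eps ν a) (eps ν b) := by
      rw [hab]; exact eps_mul_le ν hν a b ha0 hb0 (hab ▸ hdeg)
    rcases le_total (eps ν b) (eps ν a) with h | h
    · have := hkey a hda (heps.trans (by rw [max_eq_left h]))
      omega
    · have := hkey b hdb (heps.trans (by rw [max_eq_right h]))
      omega
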